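/- Euler–Maruyama statistical linear regression residual covariance: under the setting of the previous statement (X̂ square-integrable with invertible covariance P, Z independent of X̂ with zero mean and identity second moment, A = Cov(μ(X̂), X̂) P⁻¹, b = E[μ(X̂)] − A E[X̂], and additionally E[‖σ(X̂) Z‖²] < ∞), the residual R_δ = μ(X̂) δ + √δ · σ(X̂) Z − (A X̂ + b) δ has covariance matrix Cov(R_δ, R_δ) = δ · E[σ(X̂) σ(X̂)ᵀ] + δ² · Cov(μ(X̂) − A X̂, μ(X̂) − A X̂). In particular Cov(R_δ, R_δ) = E[σ(X̂) σ(X̂)ᵀ] δ + o(δ) as δ → 0. -/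

import Mathlib

open MeasureTheory Matrix Asymptotics

/-- Entrywise cross-covariance matrix of two random vectors. -/
noncomputable def covMatrix {Ω : Type*} [MeasurableSpace Ω] (P : Measure Ω) {n d : ℕ}
    (U : Ω → EuclideanSpace ℝ (Fin n)) (V : Ω → EuclideanSpace ℝ (Fin d)) :
    Matrix (Fin n) (Fin d) ℝ :=
  Matrix.of fun i j =>
    ∫ ω, (U ω i - ∫ ω', U ω' i ∂P) * (V ω j - ∫ ω', V ω' j ∂P) ∂P

lemma myMemℒp_component {Ω : Type*} [MeasurableSpace Ω] {P : Measure Ω} {n : ℕ}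
    {f : Ω → EuclideanSpace ℝ (Fin n)} (hf : MemLp f 2 P) (i : Fin n) :
    MemLp (fun ω => f ω i) 2 P :=
  (EuclideanSpace.proj i : EuclideanSpace ℝ (Fin n) →L[ℝ] ℝ).comp_memLp' hf

lemma myIntegrable_mul_L2 {Ω : Type*} [MeasurableSpace Ω] {P : Measure Ω}
    {f g : Ω → ℝ} (hf : MemLp f 2 P) (hg : MemLp g 2 P) :
    Integrable (fun ω => f ω * g ω) P := by
  have h := hg.smul hf (r := 1)
  rw [memLp_one_iff_integrable] at h
  have : (fun ω => f ω * g ω) = f • g := by funext ω; simp [smul_eq_mul]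
  rw [this]; exact h

lemma myMemℒp_component' {Ω : Type*} [MeasurableSpace Ω] {P : Measure Ω} {ι : Type*}
    [Fintype ι] {f : Ω → ι → ℝ} (hf : MemLp f 2 P) (i : ι) :
    MemLp (fun ω => f ω i) 2 P :=
  (ContinuousLinearMap.proj (R := ℝ) (φ := fun _ : ι => ℝ) i).comp_memLp' hf

lemma mylittleo (c : ℝ) : (fun δ : ℝ => δ ^ 2 * c) =o[nhdsWithin 0 (Set.Ioi 0)] fun δ => δ := by
  have h1 : (fun δ : ℝ => δ * c) =o[nhdsWithin (0:ℝ) (Set.Ioi 0)] (fun _ => (1:ℝ)) := by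
    rw [isLittleO_one_iff]
    have : Filter.Tendsto (fun δ : ℝ => δ * c) (nhds 0) (nhds (0 * c)) :=
      (continuous_id.mul (continuous_const (y := c))).tendsto (0:ℝ)
    simpa using this.mono_left nhdsWithin_le_nhds
  have h2 := h1.mul_isBigO (isBigO_refl (fun δ : ℝ => δ) (nhdsWithin (0:ℝ) (Set.Ioi 0)))
  have : (fun δ : ℝ => δ ^ 2 * c) = fun δ => (δ * c) * δ := by funext δ; ring
  rw [this]
  simpa using h2

/-- Euler–Maruyama statistical linear regression residual covariance:
`Cov(R_δ, R_δ) = δ E[σ(X̂)σ(X̂)ᵀ] + δ² Cov(μ(X̂) − A X̂, μ(X̂) − A X̂)`;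
in particular `Cov(R_δ, R_δ) = E[σ(X̂)σ(X̂)ᵀ] δ + o(δ)` as `δ → 0⁺`. -/
theorem em_slr_residual_covariance
    {Ω : Type*} [MeasurableSpace Ω] (P : Measure Ω) [IsProbabilityMeasure P]
    {d w : ℕ} (Xhat : Ω → EuclideanSpace ℝ (Fin d))
    (μ : EuclideanSpace ℝ (Fin d) → EuclideanSpace ℝ (Fin d))
    (σ : EuclideanSpace ℝ (Fin d) → Matrix (Fin d) (Fin w) ℝ)
    (Z : Ω → EuclideanSpace ℝ (Fin w))
    (hXmeas : Measurable Xhat) (hμmeas : Measurable μ)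
    (hσmeas : ∀ i j, Measurable fun x => σ x i j)
    (hZmeas : Measurable Z)
    (hX : MemLp Xhat 2 P) (hμX : MemLp (fun ω => μ (Xhat ω)) 2 P)
    (hσX : ∀ i j, MemLp (fun ω => σ (Xhat ω) i j) 2 P)
    (hZ : MemLp Z 2 P)
    (hσZ : MemLp (fun ω => (WithLp.toLp 2 (fun i => (σ (Xhat ω) *ᵥ Z ω) i) : EuclideanSpace ℝ (Fin d))) 2 P)
    (hindep : ProbabilityTheory.IndepFun Xhat Z P)
    (hZmean : ∀ i, ∫ ω, Z ω i ∂P = 0)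
    (hZcov : ∀ i j, ∫ ω, Z ω i * Z ω j ∂P = (1 : Matrix (Fin w) (Fin w) ℝ) i j)
    (hP : IsUnit (covMatrix P Xhat Xhat).det)
    (A : Matrix (Fin d) (Fin d) ℝ) (b : EuclideanSpace ℝ (Fin d))
    (hA : A = covMatrix P (fun ω => μ (Xhat ω)) Xhat * (covMatrix P Xhat Xhat)⁻¹)
    (hb : ∀ i, b i = (∫ ω, μ (Xhat ω) i ∂P) - ∑ j, A i j * ∫ ω, Xhat ω j ∂P)
    (R : ℝ → Ω → EuclideanSpace ℝ (Fin d))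
    (hR : ∀ δ ω i, R δ ω i = δ * μ (Xhat ω) i + Real.sqrt δ * (σ (Xhat ω) *ᵥ Z ω) i
      - δ * ((A *ᵥ Xhat ω) i + b i)) :
    (∀ δ > (0 : ℝ), covMatrix P (R δ) (R δ) =
      δ • (Matrix.of (fun i j => ∫ ω, (σ (Xhat ω) * (σ (Xhat ω))ᵀ) i j ∂P) :
        Matrix (Fin d) (Fin d) ℝ) +
      δ ^ 2 • covMatrix P
        (fun ω => (WithLp.toLp 2 (fun i => μ (Xhat ω) i - (A *ᵥ Xhat ω) i) : EuclideanSpace ℝ (Fin d)))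
        (fun ω => (WithLp.toLp 2 (fun i => μ (Xhat ω) i - (A *ᵥ Xhat ω) i) : EuclideanSpace ℝ (Fin d)))) ∧
    (∀ i j, (fun δ => covMatrix P (R δ) (R δ) i j -
        δ * ∫ ω, (σ (Xhat ω) * (σ (Xhat ω))ᵀ) i j ∂P)
      =o[nhdsWithin (0 : ℝ) (Set.Ioi 0)] fun δ => δ) := by
  classical
  -- component-wise L² facts
  have hXi : ∀ i, MemLp (fun ω => Xhat ω i) 2 P := fun i => myMemℒp_component hX i
  have hμi : ∀ i, MemLp (fun ω => μ (Xhat ω) i) 2 P := fun i => myMemℒp_component hμX i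
  have hZi : ∀ k, MemLp (fun ω => Z ω k) 2 P := fun k => myMemℒp_component hZ k
  have hWi : ∀ i, MemLp (fun ω => (σ (Xhat ω) *ᵥ Z ω) i) 2 P :=
    fun i => myMemℒp_component hσZ i
  have hAXeq : ∀ i, (fun ω => (A *ᵥ Xhat ω) i) = fun ω => ∑ j, A i j * Xhat ω j := by
    intro i; funext ω; simp [Matrix.mulVec, dotProduct]
  have hAXi : ∀ i, MemLp (fun ω => (A *ᵥ Xhat ω) i) 2 P := by
    intro i; rw [hAXeq i]
    exact memLp_finset_sum _ fun j _ => (hXi j).const_mul _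
  have hYi : ∀ i, MemLp (fun ω => μ (Xhat ω) i - (A *ᵥ Xhat ω) i - b i) 2 P :=
    fun i => ((hμi i).sub (hAXi i)).sub (memLp_const _)
  -- means
  have hEAX : ∀ i, ∫ ω, (A *ᵥ Xhat ω) i ∂P = ∑ j, A i j * ∫ ω, Xhat ω j ∂P := by
    intro i
    rw [hAXeq i, integral_finset_sum _ (fun j _ => ((hXi j).integrable one_le_two).const_mul _)]
    exact Finset.sum_congr rfl fun j _ => integral_const_mul _ _
  have hEY : ∀ i, ∫ ω, (μ (Xhat ω) i - (A *ᵥ Xhat ω) i - b i) ∂P = 0 := by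
    intro i
    have hint1 : Integrable (fun ω => μ (Xhat ω) i - (A *ᵥ Xhat ω) i) P :=
      ((hμi i).sub (hAXi i)).integrable one_le_two
    rw [integral_sub hint1 (integrable_const _),
      integral_sub ((hμi i).integrable one_le_two) ((hAXi i).integrable one_le_two),
      integral_const, hEAX, hb i]
    simp
  -- independence tool
  have key_int : ∀ (g : EuclideanSpace ℝ (Fin d) → ℝ) (h : EuclideanSpace ℝ (Fin w) → ℝ),
      Measurable g → Measurable h → Integrable (fun ω => g (Xhat ω)) P →
      Integrable (fun ω => h (Z ω)) P →
      Integrable (fun ω => g (Xhat ω) * h (Z ω)) P ∧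
      ∫ ω, g (Xhat ω) * h (Z ω) ∂P = (∫ ω, g (Xhat ω) ∂P) * ∫ ω, h (Z ω) ∂P := by
    intro g h hg hh hgi hhi
    have hi : ProbabilityTheory.IndepFun (fun ω => g (Xhat ω)) (fun ω => h (Z ω)) P :=
      hindep.comp hg hh
    exact ⟨hi.integrable_mul hgi hhi, hi.integral_fun_mul_eq_mul_integral hgi.1 hhi.1⟩
  -- measurability of components
  have hμimeas : ∀ i, Measurable (fun x : EuclideanSpace ℝ (Fin d) => μ x i) :=
    fun i => (measurable_pi_apply i).comp ((WithLp.measurable_ofLp 2 _).comp hμmeas)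
  have hAximeas : ∀ i, Measurable (fun x : EuclideanSpace ℝ (Fin d) => (A *ᵥ x) i) := by
    intro i
    have : (fun x : EuclideanSpace ℝ (Fin d) => (A *ᵥ x) i)
        = fun x => ∑ j, A i j * x j := by
      funext x; simp [Matrix.mulVec, dotProduct]
    rw [this]
    exact Finset.measurable_sum _ fun j _ => ((measurable_pi_apply j).comp (WithLp.measurable_ofLp 2 _)).const_mul _
  have hYmeas : ∀ i, Measurable (fun x : EuclideanSpace ℝ (Fin d) =>
      μ x i - (A *ᵥ x) i - b i) :=
    fun i => ((hμimeas i).sub (hAximeas i)).sub measurable_const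
  -- E[W] = 0
  have hWeq : ∀ j, (fun ω => (σ (Xhat ω) *ᵥ Z ω) j)
      = fun ω => ∑ k, σ (Xhat ω) j k * Z ω k := by
    intro j; funext ω; simp [Matrix.mulVec, dotProduct]
  have hEW : ∀ i, ∫ ω, (σ (Xhat ω) *ᵥ Z ω) i ∂P = 0 := by
    intro i
    rw [hWeq i, integral_finset_sum _ (fun k _ =>
      (key_int (fun x => σ x i k) (fun z => z k) (hσmeas i k) ((measurable_pi_apply k).comp (WithLp.measurable_ofLp 2 _))
        ((hσX i k).integrable one_le_two) ((hZi k).integrable one_le_two)).1)]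
    refine Finset.sum_eq_zero fun k _ => ?_
    rw [(key_int (fun x => σ x i k) (fun z => z k) (hσmeas i k) ((measurable_pi_apply k).comp (WithLp.measurable_ofLp 2 _))
      ((hσX i k).integrable one_le_two) ((hZi k).integrable one_le_two)).2, hZmean k, mul_zero]
  -- E[Y_i W_j] = 0
  have hEcross : ∀ i j, ∫ ω, (μ (Xhat ω) i - (A *ᵥ Xhat ω) i - b i)
      * (σ (Xhat ω) *ᵥ Z ω) j ∂P = 0 := by
    intro i j
    have h1 : (fun ω => (μ (Xhat ω) i - (A *ᵥ Xhat ω) i - b i) * (σ (Xhat ω) *ᵥ Z ω) j)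
        = fun ω => ∑ k, ((μ (Xhat ω) i - (A *ᵥ Xhat ω) i - b i) * σ (Xhat ω) j k) * Z ω k := by
      funext ω
      simp [Matrix.mulVec, dotProduct, Finset.mul_sum, mul_assoc]
    have hterm : ∀ k, Integrable (fun ω =>
        ((μ (Xhat ω) i - (A *ᵥ Xhat ω) i - b i) * σ (Xhat ω) j k) * Z ω k) P ∧
        ∫ ω, ((μ (Xhat ω) i - (A *ᵥ Xhat ω) i - b i) * σ (Xhat ω) j k) * Z ω k ∂P
        = (∫ ω, (μ (Xhat ω) i - (A *ᵥ Xhat ω) i - b i) * σ (Xhat ω) j k ∂P)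
          * ∫ ω, Z ω k ∂P :=
      fun k => key_int (fun x => (μ x i - (A *ᵥ x) i - b i) * σ x j k) (fun z => z k)
        ((hYmeas i).mul (hσmeas j k)) ((measurable_pi_apply k).comp (WithLp.measurable_ofLp 2 _))
        (myIntegrable_mul_L2 (hYi i) (hσX j k)) ((hZi k).integrable one_le_two)
    rw [h1, integral_finset_sum _ (fun k _ => (hterm k).1)]
    refine Finset.sum_eq_zero fun k _ => ?_
    rw [(hterm k).2, hZmean k, mul_zero]
  -- E[W_i W_j] = E[(σσᵀ)_{ij}]
  have hEWW : ∀ i j, ∫ ω, (σ (Xhat ω) *ᵥ Z ω) i * (σ (Xhat ω) *ᵥ Z ω) j ∂P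
      = ∫ ω, (σ (Xhat ω) * (σ (Xhat ω))ᵀ) i j ∂P := by
    intro i j
    have h1 : (fun ω => (σ (Xhat ω) *ᵥ Z ω) i * (σ (Xhat ω) *ᵥ Z ω) j)
        = fun ω => ∑ k, ∑ l, (σ (Xhat ω) i k * σ (Xhat ω) j l) * (Z ω k * Z ω l) := by
      funext ω
      have e1 : (σ (Xhat ω) *ᵥ Z ω) i = ∑ k, σ (Xhat ω) i k * Z ω k := by
        simp [Matrix.mulVec, dotProduct]
      have e2 : (σ (Xhat ω) *ᵥ Z ω) j = ∑ l, σ (Xhat ω) j l * Z ω l := by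
        simp [Matrix.mulVec, dotProduct]
      rw [e1, e2, Finset.sum_mul_sum]
      exact Finset.sum_congr rfl fun k _ => Finset.sum_congr rfl fun l _ => by ring
    have hterm : ∀ k l, Integrable (fun ω =>
        (σ (Xhat ω) i k * σ (Xhat ω) j l) * (Z ω k * Z ω l)) P ∧
        ∫ ω, (σ (Xhat ω) i k * σ (Xhat ω) j l) * (Z ω k * Z ω l) ∂P
        = (∫ ω, σ (Xhat ω) i k * σ (Xhat ω) j l ∂P) * ∫ ω, Z ω k * Z ω l ∂P :=
      fun k l => key_int (fun x => σ x i k * σ x j l) (fun z => z k * z l)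
        ((hσmeas i k).mul (hσmeas j l)) (((measurable_pi_apply k).comp (WithLp.measurable_ofLp 2 _)).mul ((measurable_pi_apply l).comp (WithLp.measurable_ofLp 2 _)))
        (myIntegrable_mul_L2 (hσX i k) (hσX j l)) (myIntegrable_mul_L2 (hZi k) (hZi l))
    rw [h1, integral_finset_sum _ (fun k _ => integrable_finset_sum _ (fun l _ => (hterm k l).1))]
    have h2 : ∀ k, ∫ ω, ∑ l, (σ (Xhat ω) i k * σ (Xhat ω) j l) * (Z ω k * Z ω l) ∂P
        = ∫ ω, σ (Xhat ω) i k * σ (Xhat ω) j k ∂P := by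
      intro k
      rw [integral_finset_sum _ (fun l _ => (hterm k l).1)]
      have h3 : ∀ l, ∫ ω, (σ (Xhat ω) i k * σ (Xhat ω) j l) * (Z ω k * Z ω l) ∂P
          = (∫ ω, σ (Xhat ω) i k * σ (Xhat ω) j l ∂P) * (1 : Matrix (Fin w) (Fin w) ℝ) k l :=
        fun l => by rw [(hterm k l).2, hZcov k l]
      simp_rw [h3, Matrix.one_apply, mul_ite, mul_one, mul_zero]
      simp
    simp_rw [h2]
    have h4 : (fun ω => (σ (Xhat ω) * (σ (Xhat ω))ᵀ) i j)
        = fun ω => ∑ k, σ (Xhat ω) i k * σ (Xhat ω) j k := by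
      funext ω; simp [Matrix.mul_apply]
    rw [h4, integral_finset_sum _ (fun k _ => myIntegrable_mul_L2 (hσX i k) (hσX j k))]
  -- covariance matrix of μ - A X̂
  have hEb : ∀ i, ∫ ω, (μ (Xhat ω) i - (A *ᵥ Xhat ω) i) ∂P = b i := by
    intro i
    rw [integral_sub ((hμi i).integrable one_le_two) ((hAXi i).integrable one_le_two),
      hEAX, hb i]
  have hC : ∀ i j, covMatrix P
      (fun ω => (WithLp.toLp 2 (fun i => μ (Xhat ω) i - (A *ᵥ Xhat ω) i) : EuclideanSpace ℝ (Fin d)))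
      (fun ω => (WithLp.toLp 2 (fun i => μ (Xhat ω) i - (A *ᵥ Xhat ω) i) : EuclideanSpace ℝ (Fin d))) i j
      = ∫ ω, (μ (Xhat ω) i - (A *ᵥ Xhat ω) i - b i)
        * (μ (Xhat ω) j - (A *ᵥ Xhat ω) j - b j) ∂P := by
    intro i j
    simp only [covMatrix, Matrix.of_apply, PiLp.toLp_apply]
    rw [hEb i, hEb j]
  -- residual components
  have hReq : ∀ δ i, (fun ω => R δ ω i) = fun ω =>
      δ * (μ (Xhat ω) i - (A *ᵥ Xhat ω) i - b i)
      + Real.sqrt δ * (σ (Xhat ω) *ᵥ Z ω) i := by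
    intro δ i; funext ω; rw [hR]; ring
  have hRL2 : ∀ δ i, MemLp (fun ω => R δ ω i) 2 P := by
    intro δ i
    rw [hReq δ i]
    exact ((hYi i).const_mul δ).add ((hWi i).const_mul _)
  have hER : ∀ δ i, ∫ ω, R δ ω i ∂P = 0 := by
    intro δ i
    rw [hReq δ i, integral_add (((hYi i).const_mul δ).integrable one_le_two)
      (((hWi i).const_mul _).integrable one_le_two),
      integral_const_mul, integral_const_mul, hEY i, hEW i]
    ring
  -- main entrywise identity
  have hmain : ∀ δ, 0 < δ → ∀ i j, covMatrix P (R δ) (R δ) i j =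
      δ * (∫ ω, (σ (Xhat ω) * (σ (Xhat ω))ᵀ) i j ∂P)
      + δ ^ 2 * ∫ ω, (μ (Xhat ω) i - (A *ᵥ Xhat ω) i - b i)
        * (μ (Xhat ω) j - (A *ᵥ Xhat ω) j - b j) ∂P := by
    intro δ hδ i j
    have hs : Real.sqrt δ * Real.sqrt δ = δ := Real.mul_self_sqrt hδ.le
    simp only [covMatrix, Matrix.of_apply]
    rw [hER δ i, hER δ j]
    have hexp : (fun ω => (R δ ω i - 0) * (R δ ω j - 0)) = fun ω =>
        δ ^ 2 * ((μ (Xhat ω) i - (A *ᵥ Xhat ω) i - b i)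
            * (μ (Xhat ω) j - (A *ᵥ Xhat ω) j - b j))
        + (δ * Real.sqrt δ) * ((μ (Xhat ω) i - (A *ᵥ Xhat ω) i - b i)
            * (σ (Xhat ω) *ᵥ Z ω) j)
        + (δ * Real.sqrt δ) * ((μ (Xhat ω) j - (A *ᵥ Xhat ω) j - b j)
            * (σ (Xhat ω) *ᵥ Z ω) i)
        + δ * ((σ (Xhat ω) *ᵥ Z ω) i * (σ (Xhat ω) *ᵥ Z ω) j) := by
      funext ω
      rw [sub_zero, sub_zero, hR, hR]
      linear_combination ((σ (Xhat ω) *ᵥ Z ω) i * (σ (Xhat ω) *ᵥ Z ω) j) * hs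
    have i1 : Integrable (fun ω => δ ^ 2 * ((μ (Xhat ω) i - (A *ᵥ Xhat ω) i - b i)
        * (μ (Xhat ω) j - (A *ᵥ Xhat ω) j - b j))) P :=
      (myIntegrable_mul_L2 (hYi i) (hYi j)).const_mul _
    have i2 : Integrable (fun ω => (δ * Real.sqrt δ) * ((μ (Xhat ω) i - (A *ᵥ Xhat ω) i - b i)
        * (σ (Xhat ω) *ᵥ Z ω) j)) P :=
      (myIntegrable_mul_L2 (hYi i) (hWi j)).const_mul _
    have i3 : Integrable (fun ω => (δ * Real.sqrt δ) * ((μ (Xhat ω) j - (A *ᵥ Xhat ω) j - b j)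
        * (σ (Xhat ω) *ᵥ Z ω) i)) P :=
      (myIntegrable_mul_L2 (hYi j) (hWi i)).const_mul _
    have i4 : Integrable (fun ω => δ * ((σ (Xhat ω) *ᵥ Z ω) i * (σ (Xhat ω) *ᵥ Z ω) j)) P :=
      (myIntegrable_mul_L2 (hWi i) (hWi j)).const_mul _
    have i12 : Integrable (fun ω => δ ^ 2 * ((μ (Xhat ω) i - (A *ᵥ Xhat ω) i - b i)
        * (μ (Xhat ω) j - (A *ᵥ Xhat ω) j - b j))
        + (δ * Real.sqrt δ) * ((μ (Xhat ω) i - (A *ᵥ Xhat ω) i - b i)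
            * (σ (Xhat ω) *ᵥ Z ω) j)) P := i1.add i2
    have i123 : Integrable (fun ω => δ ^ 2 * ((μ (Xhat ω) i - (A *ᵥ Xhat ω) i - b i)
        * (μ (Xhat ω) j - (A *ᵥ Xhat ω) j - b j))
        + (δ * Real.sqrt δ) * ((μ (Xhat ω) i - (A *ᵥ Xhat ω) i - b i)
            * (σ (Xhat ω) *ᵥ Z ω) j)
        + (δ * Real.sqrt δ) * ((μ (Xhat ω) j - (A *ᵥ Xhat ω) j - b j)
            * (σ (Xhat ω) *ᵥ Z ω) i)) P := i12.add i3
    rw [hexp, integral_add i123 i4, integral_add i12 i3,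
      integral_add i1 i2, integral_const_mul, integral_const_mul, integral_const_mul,
      integral_const_mul, hEcross i j, hEcross j i, hEWW i j]
    ring
  constructor
  · intro δ hδ
    ext i j
    simp only [Matrix.add_apply, Matrix.smul_apply, Matrix.of_apply, smul_eq_mul]
    rw [hmain δ hδ i j, hC i j]
  · intro i j
    refine ((mylittleo (∫ ω, (μ (Xhat ω) i - (A *ᵥ Xhat ω) i - b i)
      * (μ (Xhat ω) j - (A *ᵥ Xhat ω) j - b j) ∂P)).congr' ?_ Filter.EventuallyEq.rfl)
    filter_upwards [self_mem_nhdsWithin] with δ hδ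
    rw [hmain δ hδ i j]
    ring
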